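/- Let a(n) denote the number of permutations of length n avoiding both patterns 321 and 1342. Then, as formal power series over ℚ, (1 − 5X + 9X² − 7X³ + 2X⁴) · ∑_{n≥0} a(n)·Xⁿ = 1 − 4X + 6X² − 3X³ + X⁴. -/

import Mathlib

/-- A permutation `π` of length `n` contains the pattern `p` (a length-`k`
sequence of distinct values, given by its values) if there is a strictly
increasing choice of `k` indices on which `π` is order isomorphic to `p`. -/
def PermContains {n k : ℕ} (π : Equiv.Perm (Fin n)) (p : Fin k → ℕ) : Prop :=
  ∃ f : Fin k → Fin n, StrictMono f ∧ ∀ a b : Fin k, p a < p b ↔ π (f a) < π (f b)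

/-- `π` avoids the pattern `p`. -/
def PermAvoids {n k : ℕ} (π : Equiv.Perm (Fin n)) (p : Fin k → ℕ) : Prop :=
  ¬ PermContains π p

set_option maxHeartbeats 1600000

namespace AvWork

instance instDecC {n k : ℕ} (π : Equiv.Perm (Fin n)) (p : Fin k → ℕ) :
    Decidable (PermContains π p) := by unfold PermContains; infer_instance

instance instDecA {n k : ℕ} (π : Equiv.Perm (Fin n)) (p : Fin k → ℕ) :
    Decidable (PermAvoids π p) := by unfold PermAvoids; infer_instance

def Avoid {n : ℕ} (π : Equiv.Perm (Fin n)) : Prop :=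
  PermAvoids π ![3, 2, 1] ∧ PermAvoids π ![1, 3, 4, 2]

instance instDecAv {n : ℕ} : DecidablePred (Avoid (n := n)) :=
  fun _ => by unfold Avoid; infer_instance

theorem contains321_iff {n : ℕ} (π : Equiv.Perm (Fin n)) :
    PermContains π ![3,2,1] ↔ ∃ i j k : Fin n, i < j ∧ j < k ∧ π k < π j ∧ π j < π i := by
  constructor
  · rintro ⟨f, hf, hiff⟩
    exact ⟨f 0, f 1, f 2, hf (by decide), hf (by decide),
      (hiff 2 1).1 (by decide), (hiff 1 0).1 (by decide)⟩
  · rintro ⟨i, j, k, hij, hjk, h1, h2⟩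
    refine ⟨![i, j, k], ?_, ?_⟩
    · intro a b hab
      fin_cases a <;> fin_cases b <;> simp_all <;> omega
    · intro a b
      fin_cases a <;> fin_cases b <;>
        simp [Matrix.cons_val_zero, Matrix.cons_val_one] <;> omega

theorem contains1342_iff {n : ℕ} (π : Equiv.Perm (Fin n)) :
    PermContains π ![1,3,4,2] ↔ ∃ i j k l : Fin n, i < j ∧ j < k ∧ k < l ∧
      π i < π l ∧ π l < π j ∧ π j < π k := by
  constructor
  · rintro ⟨f, hf, hiff⟩
    exact ⟨f 0, f 1, f 2, f 3, hf (by decide), hf (by decide), hf (by decide),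
      (hiff 0 3).1 (by decide), (hiff 3 1).1 (by decide), (hiff 1 2).1 (by decide)⟩
  · rintro ⟨i, j, k, l, hij, hjk, hkl, h1, h2, h3⟩
    refine ⟨![i, j, k, l], ?_, ?_⟩
    · intro a b hab
      fin_cases a <;> fin_cases b <;> simp_all <;> omega
    · intro a b
      fin_cases a <;> fin_cases b <;>
        simp [Matrix.cons_val_zero, Matrix.cons_val_one] <;> omega

/-- value-level characterization of avoidance -/
theorem avoid_iff {n : ℕ} (π : Equiv.Perm (Fin n)) :
    Avoid π ↔ (∀ i j k : Fin n, i.val < j.val → j.val < k.val →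
        (π k).val < (π j).val → ¬ (π j).val < (π i).val) ∧
      (∀ i j k l : Fin n, i.val < j.val → j.val < k.val → k.val < l.val →
        (π i).val < (π l).val → (π l).val < (π j).val → ¬ (π j).val < (π k).val) := by
  unfold Avoid PermAvoids
  rw [contains321_iff, contains1342_iff]
  simp only [Fin.lt_def]
  constructor
  · rintro ⟨h1, h2⟩
    exact ⟨fun i j k a b c d => h1 ⟨i,j,k,a,b,c,d⟩,
           fun i j k l a b c d e f => h2 ⟨i,j,k,l,a,b,c,d,e,f⟩⟩
  · rintro ⟨h1, h2⟩
    constructor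
    · rintro ⟨i,j,k,a,b,c,d⟩; exact h1 i j k a b c d
    · rintro ⟨i,j,k,l,a,b,c,d,e,f⟩; exact h2 i j k l a b c d e f

/-! ### The template permutations for small last value -/

/-- template: `u+1, …, n, 0, 1, …, t-1, n+1, t, …, u-1, u`  (length `n+2`). -/
def Ftemp (n u t i : ℕ) : ℕ :=
  if i < n - u then u + 1 + i
  else if i < n - u + t then i - (n - u)
  else if i = n - u + t then n + 1
  else if i < n + 1 then i - (n - u) - 1
  else u

theorem Ftemp_lt {n u t : ℕ} (hu : u < n) (ht : t ≤ u) {i : ℕ} (hi : i < n + 2) :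
    Ftemp n u t i < n + 2 := by
  unfold Ftemp; split_ifs <;> omega

theorem Ftemp_inj {n u t : ℕ} (hu : u < n) (ht : t ≤ u) {i j : ℕ}
    (hi : i < n + 2) (hj : j < n + 2) (h : Ftemp n u t i = Ftemp n u t j) : i = j := by
  unfold Ftemp at h; split_ifs at h <;> omega

noncomputable def Tperm (n u t : ℕ) (hu : u < n) (ht : t ≤ u) : Equiv.Perm (Fin (n + 2)) :=
  Equiv.ofBijective (fun i => ⟨Ftemp n u t i.val, Ftemp_lt hu ht i.isLt⟩)
    (Finite.injective_iff_bijective.mp (fun i j h => by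
      exact Fin.ext (Ftemp_inj hu ht i.isLt j.isLt (by simpa using congrArg Fin.val h))))

@[simp] theorem Tperm_apply (n u t : ℕ) (hu : u < n) (ht : t ≤ u) (i : Fin (n + 2)) :
    ((Tperm n u t hu ht) i).val = Ftemp n u t i.val := rfl

theorem Fspec {n u t : ℕ} (hu : u < n) (ht : t ≤ u) {i : ℕ} (hi : i < n + 2) :
    (i < n - u ∧ Ftemp n u t i = u + 1 + i) ∨
    (n - u ≤ i ∧ i < n - u + t ∧ Ftemp n u t i = i - (n - u)) ∨
    (i = n - u + t ∧ Ftemp n u t i = n + 1) ∨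
    (n - u + t < i ∧ i < n + 1 ∧ Ftemp n u t i = i - (n - u) - 1) ∨
    (i = n + 1 ∧ Ftemp n u t i = u) := by
  unfold Ftemp; split_ifs <;> omega

theorem Tperm_avoid (n u t : ℕ) (hu : u < n) (ht : t ≤ u) : Avoid (Tperm n u t hu ht) := by
  rw [avoid_iff]
  constructor
  · intro i j k hij hjk h1 h2
    simp only [Tperm_apply] at h1 h2
    rcases Fspec hu ht i.isLt with ⟨_,e1⟩|⟨_,_,e1⟩|⟨_,e1⟩|⟨_,_,e1⟩|⟨_,e1⟩ <;>
    rcases Fspec hu ht j.isLt with ⟨_,e2⟩|⟨_,_,e2⟩|⟨_,e2⟩|⟨_,_,e2⟩|⟨_,e2⟩ <;>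
    rcases Fspec hu ht k.isLt with ⟨_,e3⟩|⟨_,_,e3⟩|⟨_,e3⟩|⟨_,_,e3⟩|⟨_,e3⟩ <;>
    omega
  · intro i j k l hij hjk hkl h1 h2 h3
    simp only [Tperm_apply] at h1 h2 h3
    rcases Fspec hu ht i.isLt with ⟨_,e1⟩|⟨_,_,e1⟩|⟨_,e1⟩|⟨_,_,e1⟩|⟨_,e1⟩ <;>
    rcases Fspec hu ht j.isLt with ⟨_,e2⟩|⟨_,_,e2⟩|⟨_,e2⟩|⟨_,_,e2⟩|⟨_,e2⟩ <;>
    rcases Fspec hu ht k.isLt with ⟨_,e3⟩|⟨_,_,e3⟩|⟨_,e3⟩|⟨_,_,e3⟩|⟨_,e3⟩ <;>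
    rcases Fspec hu ht l.isLt with ⟨_,e4⟩|⟨_,_,e4⟩|⟨_,e4⟩|⟨_,_,e4⟩|⟨_,e4⟩ <;>
    omega

theorem chain_mono {g : ℕ → ℕ} {m : ℕ} (mono : ∀ a b, a < b → b ≤ m → g a < g b) :
    ∀ k a, a + k ≤ m → g a + k ≤ g (a + k) := by
  intro k
  induction k with
  | zero => intro a _; simp
  | succ k ih =>
    intro a h
    have h1 := ih a (by omega)
    have h2 := mono (a + k) (a + k + 1) (by omega) (by omega)
    have h3 : a + (k + 1) = a + k + 1 := by omega
    rw [h3]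
    omega

set_option maxHeartbeats 8000000 in
theorem classify {n u : ℕ} (hu : u < n) (π : Equiv.Perm (Fin (n + 2))) (hav : Avoid π)
    (hlast : (π ⟨n + 1, by omega⟩).val = u) :
    ∃ t : ℕ, ∃ ht : t ≤ u, π = Tperm n u t hu ht := by
  classical
  obtain ⟨g, gdef⟩ : ∃ g : ℕ → ℕ, ∀ i (h : i < n + 2), g i = (π ⟨i, h⟩).val :=
    ⟨fun i => if h : i < n + 2 then (π ⟨i, h⟩).val else 0, fun i h => by simp [h]⟩
  have glt : ∀ i, i < n + 2 → g i < n + 2 := by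
    intro i h; rw [gdef i h]; exact (π _).isLt
  have ginj : ∀ i j, i < n + 2 → j < n + 2 → g i = g j → i = j := by
    intro i j hi hj h
    rw [gdef i hi, gdef j hj] at h
    exact congrArg Fin.val (π.injective (Fin.ext h))
  have glast : g (n + 1) = u := by rw [gdef (n+1) (by omega)]; exact hlast
  obtain ⟨no321, no1342⟩ := (avoid_iff π).mp hav
  have N321 : ∀ i j k, i < j → j < k → k < n + 2 → g k < g j → g j < g i → False := by
    intro i j k hij hjk hk h1 h2
    have hj : j < n + 2 := lt_trans hjk hk
    have hi : i < n + 2 := lt_trans hij hj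
    rw [gdef k hk, gdef j hj] at h1
    rw [gdef j hj, gdef i hi] at h2
    exact no321 ⟨i, hi⟩ ⟨j, hj⟩ ⟨k, hk⟩ hij hjk h1 h2
  have N1342 : ∀ i j k l, i < j → j < k → k < l → l < n + 2 →
      g i < g l → g l < g j → g j < g k → False := by
    intro i j k l hij hjk hkl hl h1 h2 h3
    have hk2 : k < n + 2 := lt_trans hkl hl
    have hj : j < n + 2 := lt_trans hjk hk2
    have hi : i < n + 2 := lt_trans hij hj
    rw [gdef i hi, gdef l hl] at h1
    rw [gdef l hl, gdef j hj] at h2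
    rw [gdef j hj, gdef k hk2] at h3
    exact no1342 ⟨i, hi⟩ ⟨j, hj⟩ ⟨k, hk2⟩ ⟨l, hl⟩ hij hjk hkl h1 h2 h3
  have H1 : ∀ i j, i < j → j < n + 1 → u < g j → g i < g j := by
    intro i j hij hj hgj
    rcases Nat.lt_trichotomy (g i) (g j) with h | h | h
    · exact h
    · exact absurd (ginj i j (by omega) (by omega) h) (by omega)
    · exact absurd (N321 i j (n+1) hij (by omega) (by omega) (by omega) h) (fun x => x)
  obtain ⟨q, hqN, gq⟩ : ∃ q, ∃ hq : q < n + 2, g q = n + 1 := by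
    refine ⟨(π.symm ⟨n + 1, by omega⟩).val, (π.symm _).isLt, ?_⟩
    rw [gdef _ (π.symm _).isLt]
    have : π ⟨(π.symm ⟨n + 1, by omega⟩).val, (π.symm _).isLt⟩ = ⟨n + 1, by omega⟩ :=
      π.apply_symm_apply _
    rw [this]
  obtain ⟨r, hrN, gr⟩ : ∃ r, ∃ hr : r < n + 2, g r = n := by
    refine ⟨(π.symm ⟨n, by omega⟩).val, (π.symm _).isLt, ?_⟩
    rw [gdef _ (π.symm _).isLt]
    have : π ⟨(π.symm ⟨n, by omega⟩).val, (π.symm _).isLt⟩ = ⟨n, by omega⟩ :=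
      π.apply_symm_apply _
    rw [this]
  have hqne : q ≠ n + 1 := fun h => by rw [h, glast] at gq; omega
  have hrne : r ≠ n + 1 := fun h => by rw [h, glast] at gr; omega
  have hrq : r < q := by
    rcases Nat.lt_trichotomy r q with h | h | h
    · exact h
    · exact absurd (congrArg g h) (by rw [gq, gr]; omega)
    · exact absurd (H1 q r h (by omega) (by rw [gr]; omega)) (by rw [gq, gr]; omega)
  have S3 : ∀ i, i < r → u < g i := by
    intro i hi
    by_contra hle
    push_neg at hle
    have hne : g i ≠ u := fun h => by
      have := ginj i (n+1) (by omega) (by omega) (h.trans glast.symm)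
      omega
    exact N1342 i r q (n+1) hi hrq (by omega) (by omega)
      (by rw [glast]; omega) (by rw [gr, glast]; omega) (by rw [gq, gr]; omega)
  have S4a : ∀ i, r < i → i < n + 1 → i ≠ q → g i < u := by
    intro i hri hi hiq
    by_contra hle
    push_neg at hle
    have hne : g i ≠ u := fun h => by
      have := ginj i (n+1) (by omega) (by omega) (h.trans glast.symm)
      omega
    have hltn : g i < n := by
      have h1 : g i ≠ n := fun h => by
        have := ginj i r (by omega) (by omega) (h.trans gr.symm); omega
      have h2 : g i ≠ n + 1 := fun h => by
        have := ginj i q (by omega) hqN (h.trans gq.symm); omega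
      have := glt i (by omega)
      omega
    exact N321 r i (n+1) hri hi (by omega) (by rw [glast]; omega) (by rw [gr]; omega)
  -- counting : there are exactly n+1-u high values
  have card_high : (Finset.univ.filter (fun i : Fin (n + 2) => u < (π i).val)).card
      = n + 1 - u := by
    have himg : Finset.univ.filter (fun i : Fin (n + 2) => u < (π i).val)
        = Finset.image π.symm (Finset.univ.filter (fun v : Fin (n + 2) => u < v.val)) := by
      ext i
      constructor
      · intro hi
        rw [Finset.mem_image]
        refine ⟨π i, ?_, π.symm_apply_apply i⟩
        simp only [Finset.mem_filter, Finset.mem_univ, true_and]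
        simpa using (Finset.mem_filter.mp hi).2
      · intro hi
        obtain ⟨v, hv, rfl⟩ := Finset.mem_image.mp hi
        simp only [Finset.mem_filter, Finset.mem_univ, true_and, Equiv.apply_symm_apply]
        simpa using (Finset.mem_filter.mp hv).2
    rw [himg, Finset.card_image_of_injective _ π.symm.injective]
    have heq : Finset.univ.filter (fun v : Fin (n + 2) => u < v.val)
        = Finset.Ioi (⟨u, by omega⟩ : Fin (n + 2)) := by
      ext v; simp [Fin.lt_def]
    rw [heq, Fin.card_Ioi]
    simp
  have mono : ∀ a b, a < b → b ≤ r → g a < g b := by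
    intro a b hab hbr
    rcases Nat.lt_or_ge b r with h | h
    · exact H1 a b hab (by omega) (S3 b h)
    · have hb : b = r := by omega
      exact H1 a b hab (by omega) (by rw [hb, gr]; omega)
  have hg0 : u < g 0 := by
    rcases Nat.eq_or_lt_of_le (Nat.zero_le r) with h | h
    · have : g 0 = n := by rw [show (0:ℕ) = r from h, gr]
      omega
    · exact S3 0 h
  have hrval : r = n - u - 1 := by
    have hup : g 0 + r ≤ g r := by
      have := chain_mono mono r 0 (by omega)
      simpa using this
    have hub : r ≤ n - u - 1 := by rw [gr] at hup; omega
    have hsub : (Finset.univ.filter (fun i : Fin (n + 2) => u < (π i).val)) ⊆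
        insert (⟨q, hqN⟩ : Fin (n + 2)) (Finset.Iic (⟨r, hrN⟩ : Fin (n + 2))) := by
      intro i hi
      simp only [Finset.mem_filter, Finset.mem_univ, true_and] at hi
      simp only [Finset.mem_insert, Finset.mem_Iic, Fin.le_def]
      have hgi : u < g i.val := by rw [gdef i.val i.isLt]; exact hi
      by_contra hcon
      push_neg at hcon
      obtain ⟨hne1, hgt⟩ := hcon
      have hiq : i.val ≠ q := fun h => hne1 (Fin.ext h)
      have hin : i.val ≠ n + 1 := fun h => by
        rw [h, glast] at hgi; omega
      exact absurd (S4a i.val (by omega) (by omega) hiq) (by omega)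
    have hcard := Finset.card_le_card hsub
    rw [card_high] at hcard
    have h2 := Finset.card_insert_le (⟨q, hqN⟩ : Fin (n + 2))
      (Finset.Iic (⟨r, hrN⟩ : Fin (n + 2)))
    rw [Fin.card_Iic] at h2
    simp only [Fin.val_mk] at h2
    omega
  have S5 : ∀ i, i ≤ r → g i = u + 1 + i := by
    intro i hi
    have hlow : g 0 + i ≤ g i := by simpa using chain_mono mono i 0 (by omega)
    have hupp : g i + (r - i) ≤ g r := by
      have := chain_mono mono (r - i) i (by omega)
      rwa [show i + (r - i) = r by omega] at this
    rw [gr] at hupp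
    omega
  have hqn : q ≤ n := by omega
  have hqr : n - u ≤ q := by omega
  refine ⟨q - (n - u), by omega, ?_⟩
  have S8 : ∀ a b, r < a → a < b → b < n + 1 → a ≠ q → b ≠ q → g a < g b := by
    intro a b hra hab hb haq hbq
    rcases Nat.lt_trichotomy (g a) (g b) with h | h | h
    · exact h
    · exact absurd (ginj a b (by omega) (by omega) h) (by omega)
    · exact absurd (N321 r a b hra hab (by omega) h
        (by rw [gr]; have := S4a a hra (by omega) haq; omega)) (fun x => x)
  have S9 : ∀ t', t' < u → g (if n - u + t' < q then n - u + t' else n - u + t' + 1) = t' := by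
    intro t' ht'
    set p : ℕ → ℕ := fun s => if n - u + s < q then n - u + s else n - u + s + 1 with hp
    show g (p t') = t'
    have hpmono : ∀ a b, a < b → b ≤ u - 1 → g (p a) < g (p b) := by
      intro a b hab hbu
      have hpa : r < p a := by simp only [hp]; split_ifs <;> omega
      have hpb : p a < p b := by simp only [hp]; split_ifs <;> omega
      have hpbn : p b < n + 1 := by simp only [hp]; split_ifs <;> omega
      have hpaq : p a ≠ q := by simp only [hp]; split_ifs <;> omega
      have hpbq : p b ≠ q := by simp only [hp]; split_ifs <;> omega
      exact S8 (p a) (p b) hpa hpb hpbn hpaq hpbq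
    have hplow : ∀ s, s ≤ u - 1 → g (p s) < u := by
      intro s hs
      refine S4a (p s) ?_ ?_ ?_
      · simp only [hp]; split_ifs <;> omega
      · simp only [hp]; split_ifs <;> omega
      · simp only [hp]; split_ifs <;> omega
    have hlow : g (p 0) + t' ≤ g (p t') := by
      have := chain_mono (g := fun s => g (p s)) hpmono t' 0 (by omega)
      simpa using this
    have hupp : g (p t') + (u - 1 - t') ≤ g (p (u - 1)) := by
      have := chain_mono (g := fun s => g (p s)) hpmono (u - 1 - t') t' (by omega)
      rwa [show t' + (u - 1 - t') = u - 1 by omega] at this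
    have hl := hplow (u-1) (le_refl _)
    omega
  apply Equiv.ext
  intro i
  apply Fin.ext
  rw [Tperm_apply]
  have hFval : Ftemp n u (q - (n - u)) i.val =
      (if i.val < n - u then u + 1 + i.val
       else if i.val < q then i.val - (n - u)
       else if i.val = q then n + 1
       else if i.val < n + 1 then i.val - (n - u) - 1
       else u) := by
    unfold Ftemp
    split_ifs <;> omega
  have hval : (π i).val = g i.val := by rw [gdef i.val i.isLt]
  rw [hval, hFval]
  rcases Nat.lt_or_ge i.val (n - u) with h1 | h1
  · rw [if_pos h1]
    exact S5 i.val (by omega)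
  rw [if_neg (by omega)]
  rcases Nat.lt_or_ge i.val q with h2 | h2
  · rw [if_pos h2]
    have := S9 (i.val - (n - u)) (by omega)
    rwa [if_pos (by omega : n - u + (i.val - (n - u)) < q),
      show n - u + (i.val - (n - u)) = i.val by omega] at this
  rw [if_neg (by omega)]
  rcases Nat.eq_or_lt_of_le h2 with h3 | h3
  · rw [if_pos h3.symm, ← h3]
    exact gq
  rw [if_neg (by omega)]
  rcases Nat.lt_or_ge i.val (n + 1) with h4 | h4
  · rw [if_pos h4]
    have := S9 (i.val - (n - u) - 1) (by omega)
    rwa [if_neg (by omega), show n - u + (i.val - (n - u) - 1) + 1 = i.val by omega] at this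
  · rw [if_neg (by omega)]
    have hi2 : i.val = n + 1 := by have := i.isLt; omega
    rw [hi2]
    exact glast

/-! ### Extension by a largest value at the end -/

noncomputable def E1 {m : ℕ} (σ : Equiv.Perm (Fin (m + 1))) : Equiv.Perm (Fin (m + 2)) :=
  Equiv.ofBijective
    (fun i => if h : i.val < m + 1 then ⟨(σ ⟨i.val, h⟩).val, Nat.lt_succ_of_lt (σ ⟨i.val, h⟩).isLt⟩
      else ⟨m + 1, Nat.lt_succ_self _⟩)
    (Finite.injective_iff_bijective.mp (by
      intro a b hab
      dsimp only at hab
      by_cases ha : a.val < m + 1 <;> by_cases hb : b.val < m + 1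
      · rw [dif_pos ha, dif_pos hb] at hab
        have h2 : (σ ⟨a.val, ha⟩).val = (σ ⟨b.val, hb⟩).val := by injection hab
        have h3 := σ.injective (Fin.ext h2)
        have h4 : a.val = b.val := by injection h3
        exact Fin.ext h4
      · rw [dif_pos ha, dif_neg hb] at hab
        have h2 : (σ ⟨a.val, ha⟩).val = m + 1 := by injection hab
        have := (σ ⟨a.val, ha⟩).isLt; omega
      · rw [dif_neg ha, dif_pos hb] at hab
        have h2 : m + 1 = (σ ⟨b.val, hb⟩).val := by injection hab
        have := (σ ⟨b.val, hb⟩).isLt; omega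
      · have := a.isLt; have := b.isLt
        exact Fin.ext (by omega)))

theorem E1_apply_lt {m : ℕ} (σ : Equiv.Perm (Fin (m + 1))) {i : Fin (m + 2)}
    (h : i.val < m + 1) : ((E1 σ) i).val = (σ ⟨i.val, h⟩).val := by
  show (dite _ _ _ : Fin (m + 2)).val = _
  rw [dif_pos h]

theorem E1_apply_last {m : ℕ} (σ : Equiv.Perm (Fin (m + 1))) {i : Fin (m + 2)}
    (h : i.val = m + 1) : ((E1 σ) i).val = m + 1 := by
  show (dite _ _ _ : Fin (m + 2)).val = _
  rw [dif_neg (by omega)]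

theorem E1_apply_cast {m : ℕ} (σ : Equiv.Perm (Fin (m + 1))) (i : Fin (m + 1))
    (h : i.val < m + 2) : ((E1 σ) ⟨i.val, h⟩).val = (σ i).val := by
  rw [E1_apply_lt σ (show (⟨i.val, h⟩ : Fin (m + 2)).val < m + 1 from i.isLt)]

theorem E1_avoid {m : ℕ} (σ : Equiv.Perm (Fin (m + 1))) : Avoid (E1 σ) ↔ Avoid σ := by
  rw [avoid_iff, avoid_iff]
  constructor
  · rintro ⟨h3, h4⟩
    constructor
    · intro i j k hij hjk hd1 hd2
      refine h3 ⟨i.val, by omega⟩ ⟨j.val, by omega⟩ ⟨k.val, by omega⟩ hij hjk ?_ ?_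
      · rw [E1_apply_cast σ k, E1_apply_cast σ j]; exact hd1
      · rw [E1_apply_cast σ j, E1_apply_cast σ i]; exact hd2
    · intro i j k l hij hjk hkl hd1 hd2 hd3
      refine h4 ⟨i.val, by omega⟩ ⟨j.val, by omega⟩ ⟨k.val, by omega⟩ ⟨l.val, by omega⟩
        hij hjk hkl ?_ ?_ ?_
      · rw [E1_apply_cast σ i, E1_apply_cast σ l]; exact hd1
      · rw [E1_apply_cast σ l, E1_apply_cast σ j]; exact hd2
      · rw [E1_apply_cast σ j, E1_apply_cast σ k]; exact hd3
  · rintro ⟨h3, h4⟩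
    constructor
    · intro i j k hij hjk hd1 hd2
      rcases Nat.lt_or_ge k.val (m + 1) with hk | hk
      · have hj : j.val < m + 1 := by omega
        have hi : i.val < m + 1 := by omega
        rw [E1_apply_lt σ hk, E1_apply_lt σ hj] at hd1
        rw [E1_apply_lt σ hj, E1_apply_lt σ hi] at hd2
        exact h3 ⟨i.val, hi⟩ ⟨j.val, hj⟩ ⟨k.val, hk⟩ hij hjk hd1 hd2
      · have hk2 : k.val = m + 1 := by have := k.isLt; omega
        rw [E1_apply_last σ hk2] at hd1
        have := ((E1 σ) j).isLt
        omega
    · intro i j k l hij hjk hkl hd1 hd2 hd3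
      rcases Nat.lt_or_ge l.val (m + 1) with hl | hl
      · have hk : k.val < m + 1 := by omega
        have hj : j.val < m + 1 := by omega
        have hi : i.val < m + 1 := by omega
        rw [E1_apply_lt σ hi, E1_apply_lt σ hl] at hd1
        rw [E1_apply_lt σ hl, E1_apply_lt σ hj] at hd2
        rw [E1_apply_lt σ hj, E1_apply_lt σ hk] at hd3
        exact h4 ⟨i.val, hi⟩ ⟨j.val, hj⟩ ⟨k.val, hk⟩ ⟨l.val, hl⟩ hij hjk hkl hd1 hd2 hd3
      · have hl2 : l.val = m + 1 := by have := l.isLt; omega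
        have hj : j.val < m + 1 := by omega
        rw [E1_apply_last σ hl2] at hd2
        have := ((E1 σ) j).isLt
        omega

/-! ### Extension by the second largest value at the end -/

/-- bump `m` to `m+1` -/
def bump (m v : ℕ) : ℕ := if v = m then m + 1 else v

theorem bump_lt_iff {m a b : ℕ} (ha : a ≤ m) (hb : b ≤ m) :
    bump m a < bump m b ↔ a < b := by
  unfold bump; split_ifs <;> omega

theorem bump_le {m v : ℕ} (h : v ≤ m) : bump m v ≤ m + 1 := by
  unfold bump; split_ifs <;> omega

noncomputable def E2 {m : ℕ} (σ : Equiv.Perm (Fin (m + 1))) : Equiv.Perm (Fin (m + 2)) :=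
  Equiv.ofBijective
    (fun i => if h : i.val < m + 1 then
        ⟨bump m (σ ⟨i.val, h⟩).val,
          Nat.lt_succ_of_le (bump_le (Nat.lt_succ_iff.mp (σ ⟨i.val, h⟩).isLt))⟩
      else ⟨m, by omega⟩)
    (Finite.injective_iff_bijective.mp (by
      intro a b hab
      dsimp only at hab
      by_cases ha : a.val < m + 1 <;> by_cases hb : b.val < m + 1
      · rw [dif_pos ha, dif_pos hb] at hab
        have h2 : bump m (σ ⟨a.val, ha⟩).val = bump m (σ ⟨b.val, hb⟩).val := by injection hab
        have ha2 := (σ ⟨a.val, ha⟩).isLt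
        have hb2 := (σ ⟨b.val, hb⟩).isLt
        have h2' : (σ ⟨a.val, ha⟩).val = (σ ⟨b.val, hb⟩).val := by
          unfold bump at h2; split_ifs at h2 <;> omega
        have h3 := σ.injective (Fin.ext h2')
        have h4 : a.val = b.val := by injection h3
        exact Fin.ext h4
      · rw [dif_pos ha, dif_neg hb] at hab
        have h2 : bump m (σ ⟨a.val, ha⟩).val = m := by injection hab
        have := (σ ⟨a.val, ha⟩).isLt
        unfold bump at h2; split_ifs at h2 <;> omega
      · rw [dif_neg ha, dif_pos hb] at hab
        have h2 : m = bump m (σ ⟨b.val, hb⟩).val := by injection hab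
        have := (σ ⟨b.val, hb⟩).isLt
        unfold bump at h2; split_ifs at h2 <;> omega
      · have := a.isLt; have := b.isLt
        exact Fin.ext (by omega)))

theorem E2_apply_lt {m : ℕ} (σ : Equiv.Perm (Fin (m + 1))) {i : Fin (m + 2)}
    (h : i.val < m + 1) : ((E2 σ) i).val = bump m (σ ⟨i.val, h⟩).val := by
  show (dite _ _ _ : Fin (m + 2)).val = _
  rw [dif_pos h]

theorem E2_apply_last {m : ℕ} (σ : Equiv.Perm (Fin (m + 1))) {i : Fin (m + 2)}
    (h : i.val = m + 1) : ((E2 σ) i).val = m := by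
  show (dite _ _ _ : Fin (m + 2)).val = _
  rw [dif_neg (by omega)]

theorem E2_apply_cast {m : ℕ} (σ : Equiv.Perm (Fin (m + 1))) (i : Fin (m + 1))
    (h : i.val < m + 2) : ((E2 σ) ⟨i.val, h⟩).val = bump m (σ i).val := by
  rw [E2_apply_lt σ (show (⟨i.val, h⟩ : Fin (m + 2)).val < m + 1 from i.isLt)]

theorem E2_avoid {m : ℕ} (σ : Equiv.Perm (Fin (m + 1))) : Avoid (E2 σ) ↔ Avoid σ := by
  have hb : ∀ v : Fin (m + 1), v.val ≤ m := fun v => Nat.lt_succ_iff.mp v.isLt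
  rw [avoid_iff, avoid_iff]
  constructor
  · rintro ⟨h3, h4⟩
    constructor
    · intro i j k hij hjk hd1 hd2
      refine h3 ⟨i.val, by omega⟩ ⟨j.val, by omega⟩ ⟨k.val, by omega⟩ hij hjk ?_ ?_
      · rw [E2_apply_cast σ k, E2_apply_cast σ j, bump_lt_iff (hb _) (hb _)]; exact hd1
      · rw [E2_apply_cast σ j, E2_apply_cast σ i, bump_lt_iff (hb _) (hb _)]; exact hd2
    · intro i j k l hij hjk hkl hd1 hd2 hd3
      refine h4 ⟨i.val, by omega⟩ ⟨j.val, by omega⟩ ⟨k.val, by omega⟩ ⟨l.val, by omega⟩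
        hij hjk hkl ?_ ?_ ?_
      · rw [E2_apply_cast σ i, E2_apply_cast σ l, bump_lt_iff (hb _) (hb _)]; exact hd1
      · rw [E2_apply_cast σ l, E2_apply_cast σ j, bump_lt_iff (hb _) (hb _)]; exact hd2
      · rw [E2_apply_cast σ j, E2_apply_cast σ k, bump_lt_iff (hb _) (hb _)]; exact hd3
  · rintro ⟨h3, h4⟩
    constructor
    · intro i j k hij hjk hd1 hd2
      rcases Nat.lt_or_ge k.val (m + 1) with hk | hk
      · have hj : j.val < m + 1 := by omega
        have hi : i.val < m + 1 := by omega
        rw [E2_apply_lt σ hk, E2_apply_lt σ hj, bump_lt_iff (hb _) (hb _)] at hd1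
        rw [E2_apply_lt σ hj, E2_apply_lt σ hi, bump_lt_iff (hb _) (hb _)] at hd2
        exact h3 ⟨i.val, hi⟩ ⟨j.val, hj⟩ ⟨k.val, hk⟩ hij hjk hd1 hd2
      · have hk2 : k.val = m + 1 := by have := k.isLt; omega
        have hj : j.val < m + 1 := by omega
        have hi : i.val < m + 1 := by omega
        rw [E2_apply_last σ hk2, E2_apply_lt σ hj] at hd1
        rw [E2_apply_lt σ hj, E2_apply_lt σ hi] at hd2
        have b1 := bump_le (hb (σ ⟨j.val, hj⟩))
        have b2 := bump_le (hb (σ ⟨i.val, hi⟩))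
        omega
    · intro i j k l hij hjk hkl hd1 hd2 hd3
      rcases Nat.lt_or_ge l.val (m + 1) with hl | hl
      · have hk : k.val < m + 1 := by omega
        have hj : j.val < m + 1 := by omega
        have hi : i.val < m + 1 := by omega
        rw [E2_apply_lt σ hi, E2_apply_lt σ hl, bump_lt_iff (hb _) (hb _)] at hd1
        rw [E2_apply_lt σ hl, E2_apply_lt σ hj, bump_lt_iff (hb _) (hb _)] at hd2
        rw [E2_apply_lt σ hj, E2_apply_lt σ hk, bump_lt_iff (hb _) (hb _)] at hd3
        exact h4 ⟨i.val, hi⟩ ⟨j.val, hj⟩ ⟨k.val, hk⟩ ⟨l.val, hl⟩ hij hjk hkl hd1 hd2 hd3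
      · have hl2 : l.val = m + 1 := by have := l.isLt; omega
        have hk : k.val < m + 1 := by omega
        have hj : j.val < m + 1 := by omega
        rw [E2_apply_last σ hl2, E2_apply_lt σ hj] at hd2
        rw [E2_apply_lt σ hj, E2_apply_lt σ hk] at hd3
        have b1 := bump_le (hb (σ ⟨j.val, hj⟩))
        have b2 := bump_le (hb (σ ⟨k.val, hk⟩))
        omega

/-! ### Counting -/

def AvCard (n : ℕ) : ℕ :=
  (Finset.univ.filter (fun π : Equiv.Perm (Fin n) => Avoid π)).card

theorem fiber_small (n u : ℕ) (hu : u < n) :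
    (Finset.univ.filter (fun π : Equiv.Perm (Fin (n + 2)) =>
      Avoid π ∧ (π ⟨n + 1, by omega⟩).val = u)).card = u + 1 := by
  rw [← Finset.card_range (u + 1)]
  symm
  refine Finset.card_bij (fun t ht => Tperm n u t hu (by
    have := Finset.mem_range.mp ht; omega)) ?_ ?_ ?_
  · intro t ht
    simp only [Finset.mem_filter, Finset.mem_univ, true_and]
    refine ⟨Tperm_avoid _ _ _ _ _, ?_⟩
    rw [Tperm_apply]
    show Ftemp n u t (n + 1) = u
    have := Finset.mem_range.mp ht
    unfold Ftemp; split_ifs <;> omega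
  · intro t₁ h₁ t₂ h₂ heq
    have m₁ := Finset.mem_range.mp h₁
    have m₂ := Finset.mem_range.mp h₂
    have := congrArg (fun e : Equiv.Perm (Fin (n + 2)) =>
      (e ⟨n - u + t₁, by omega⟩).val) heq
    simp only [Tperm_apply] at this
    unfold Ftemp at this
    split_ifs at this <;> omega
  · intro π hπ
    simp only [Finset.mem_filter, Finset.mem_univ, true_and] at hπ
    obtain ⟨t, ht, rfl⟩ := classify hu π hπ.1 hπ.2
    exact ⟨t, Finset.mem_range.mpr (by omega), rfl⟩

theorem fiber_top (n : ℕ) :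
    (Finset.univ.filter (fun π : Equiv.Perm (Fin (n + 2)) =>
      Avoid π ∧ (π ⟨n + 1, by omega⟩).val = n + 1)).card = AvCard (n + 1) := by
  rw [AvCard]
  symm
  refine Finset.card_bij (fun σ _ => E1 σ) ?_ ?_ ?_
  · intro σ hσ
    simp only [Finset.mem_filter, Finset.mem_univ, true_and] at hσ ⊢
    exact ⟨(E1_avoid σ).mpr hσ, E1_apply_last σ rfl⟩
  · intro σ₁ _ σ₂ _ heq
    apply Equiv.ext
    intro i
    apply Fin.ext
    have h0 := congrArg (fun e : Equiv.Perm (Fin (n + 2)) =>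
      (e ⟨i.val, Nat.lt_succ_of_lt i.isLt⟩).val) heq
    rwa [E1_apply_cast σ₁ i, E1_apply_cast σ₂ i] at h0
  · intro π hπ
    simp only [Finset.mem_filter, Finset.mem_univ, true_and] at hπ
    obtain ⟨hav, hlast⟩ := hπ
    have hc : ∀ x : Fin (n + 1), x.val < n + 2 := fun x => Nat.lt_succ_of_lt x.isLt
    have hvlt : ∀ i : Fin (n + 1), (π ⟨i.val, hc i⟩).val < n + 1 := by
      intro i
      have h2 := (π ⟨i.val, hc i⟩).isLt
      rcases Nat.lt_or_ge (π ⟨i.val, hc i⟩).val (n + 1) with h | h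
      · exact h
      · exfalso
        have he : (π ⟨i.val, hc i⟩).val = n + 1 := by omega
        have : π ⟨i.val, hc i⟩ = π ⟨n + 1, by omega⟩ := Fin.ext (by rw [he, hlast])
        have := π.injective this
        have : i.val = n + 1 := by injection this
        have := i.isLt; omega
    set σ : Equiv.Perm (Fin (n + 1)) := Equiv.ofBijective
      (fun i => ⟨(π ⟨i.val, hc i⟩).val, hvlt i⟩)
      (Finite.injective_iff_bijective.mp (by
        intro a b hab
        have h2 : (π ⟨a.val, hc a⟩).val = (π ⟨b.val, hc b⟩).val := by injection hab
        have h3 := π.injective (Fin.ext h2)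
        have h4 : a.val = b.val := by injection h3
        exact Fin.ext h4)) with hσ
    have hσval : ∀ i : Fin (n + 1), (σ i).val = (π ⟨i.val, hc i⟩).val := fun i => rfl
    have hE : E1 σ = π := by
      apply Equiv.ext
      intro i
      apply Fin.ext
      rcases Nat.lt_or_ge i.val (n + 1) with h | h
      · rw [E1_apply_lt σ h, hσval ⟨i.val, h⟩]
      · have h2 : i.val = n + 1 := by have := i.isLt; omega
        rw [E1_apply_last σ h2]
        have : i = ⟨n + 1, by omega⟩ := Fin.ext h2
        rw [this, hlast]
    exact ⟨σ, by
      simp only [Finset.mem_filter, Finset.mem_univ, true_and]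
      exact (E1_avoid σ).mp (hE ▸ hav), hE⟩

theorem fiber_second (n : ℕ) :
    (Finset.univ.filter (fun π : Equiv.Perm (Fin (n + 2)) =>
      Avoid π ∧ (π ⟨n + 1, by omega⟩).val = n)).card = AvCard (n + 1) := by
  rw [AvCard]
  symm
  refine Finset.card_bij (fun σ _ => E2 σ) ?_ ?_ ?_
  · intro σ hσ
    simp only [Finset.mem_filter, Finset.mem_univ, true_and] at hσ ⊢
    exact ⟨(E2_avoid σ).mpr hσ, E2_apply_last σ rfl⟩
  · intro σ₁ _ σ₂ _ heq
    apply Equiv.ext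
    intro i
    apply Fin.ext
    have hσv := congrArg (fun e : Equiv.Perm (Fin (n + 2)) =>
      (e ⟨i.val, Nat.lt_succ_of_lt i.isLt⟩).val) heq
    rw [E2_apply_cast σ₁ i, E2_apply_cast σ₂ i] at hσv
    have b₁ := Nat.lt_succ_iff.mp (σ₁ i).isLt
    have b₂ := Nat.lt_succ_iff.mp (σ₂ i).isLt
    unfold bump at hσv
    split_ifs at hσv <;> omega
  · intro π hπ
    simp only [Finset.mem_filter, Finset.mem_univ, true_and] at hπ
    obtain ⟨hav, hlast⟩ := hπ
    have hc : ∀ x : Fin (n + 1), x.val < n + 2 := fun x => Nat.lt_succ_of_lt x.isLt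
    have hlastpos : ∀ i : Fin (n + 1), (π ⟨i.val, hc i⟩).val ≠ n := by
      intro i he
      have : π ⟨i.val, hc i⟩ = π ⟨n + 1, by omega⟩ := Fin.ext (by rw [he, hlast])
      have := π.injective this
      have : i.val = n + 1 := by injection this
      have := i.isLt; omega
    have hvlt : ∀ i : Fin (n + 1),
        (if (π ⟨i.val, hc i⟩).val = n + 1 then n else (π ⟨i.val, hc i⟩).val) < n + 1 := by
      intro i
      have h2 := (π ⟨i.val, hc i⟩).isLt
      have h3 := hlastpos i
      split_ifs with h <;> omega
    set σ : Equiv.Perm (Fin (n + 1)) := Equiv.ofBijective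
      (fun i => ⟨if (π ⟨i.val, hc i⟩).val = n + 1 then n else (π ⟨i.val, hc i⟩).val, hvlt i⟩)
      (Finite.injective_iff_bijective.mp (by
        intro a b hab
        have h2 : (if (π ⟨a.val, hc a⟩).val = n + 1 then n else (π ⟨a.val, hc a⟩).val)
            = (if (π ⟨b.val, hc b⟩).val = n + 1 then n else (π ⟨b.val, hc b⟩).val) := by
          injection hab
        have ha3 := hlastpos a
        have hb3 := hlastpos b
        have h2' : (π ⟨a.val, hc a⟩).val = (π ⟨b.val, hc b⟩).val := by
          split_ifs at h2 <;> omega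
        have h3 := π.injective (Fin.ext h2')
        have h4 : a.val = b.val := by injection h3
        exact Fin.ext h4)) with hσ
    have hσval : ∀ i : Fin (n + 1), (σ i).val
        = (if (π ⟨i.val, hc i⟩).val = n + 1 then n else (π ⟨i.val, hc i⟩).val) := fun i => rfl
    have hE : E2 σ = π := by
      apply Equiv.ext
      intro i
      apply Fin.ext
      rcases Nat.lt_or_ge i.val (n + 1) with h | h
      · rw [E2_apply_lt σ h, hσval ⟨i.val, h⟩]
        have h2 := (π ⟨i.val, hc ⟨i.val, h⟩⟩).isLt
        have h3 := hlastpos ⟨i.val, h⟩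
        have : (⟨(⟨i.val, h⟩ : Fin (n + 1)).val, hc ⟨i.val, h⟩⟩ : Fin (n + 2)) = i :=
          Fin.ext rfl
        rw [this] at *
        unfold bump
        split_ifs <;> omega
      · have h2 : i.val = n + 1 := by have := i.isLt; omega
        rw [E2_apply_last σ h2]
        have : i = ⟨n + 1, by omega⟩ := Fin.ext h2
        rw [this, hlast]
    exact ⟨σ, by
      simp only [Finset.mem_filter, Finset.mem_univ, true_and]
      exact (E2_avoid σ).mp (hE ▸ hav), hE⟩

theorem avcard_rec (n : ℕ) :
    AvCard (n + 2) = 2 * AvCard (n + 1) + (Finset.range n).sum (fun u => u + 1) := by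
  classical
  have hsplit : AvCard (n + 2) = ∑ v : Fin (n + 2),
      (Finset.univ.filter (fun π : Equiv.Perm (Fin (n + 2)) =>
        Avoid π ∧ (π ⟨n + 1, by omega⟩).val = v.val)).card := by
    rw [AvCard, Finset.card_eq_sum_card_fiberwise
      (f := fun π : Equiv.Perm (Fin (n + 2)) => π ⟨n + 1, by omega⟩)
      (t := Finset.univ) (fun x _ => Finset.mem_univ _)]
    refine Finset.sum_congr rfl ?_
    intro v _
    rw [Finset.filter_filter]
    congr 1
    apply Finset.filter_congr
    intro π _
    simp [Fin.ext_iff]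
  rw [hsplit, Fin.sum_univ_eq_sum_range (fun u =>
    (Finset.univ.filter (fun π : Equiv.Perm (Fin (n + 2)) =>
      Avoid π ∧ (π ⟨n + 1, by omega⟩).val = u)).card) (n + 2)]
  rw [Finset.sum_range_succ, Finset.sum_range_succ]
  rw [fiber_top n, fiber_second n]
  have hsum : ∑ u ∈ Finset.range n,
      (Finset.univ.filter (fun π : Equiv.Perm (Fin (n + 2)) =>
        Avoid π ∧ (π ⟨n + 1, by omega⟩).val = u)).card
      = ∑ u ∈ Finset.range n, (u + 1) := by
    refine Finset.sum_congr rfl ?_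
    intro u hu
    exact fiber_small n u (Finset.mem_range.mp hu)
  rw [hsum]
  omega

theorem avcard_one : AvCard 1 = 1 := by decide

theorem avcard_zero : AvCard 0 = 1 := by decide

theorem avcard_closed : ∀ n : ℕ,
    2 * AvCard (n + 1) + ((n + 1) * (n + 1) + (n + 1) + 2) = 3 * 2 ^ (n + 1) := by
  intro n
  induction n with
  | zero => rw [avcard_one]; norm_num
  | succ k ih =>
    have hrec : AvCard (k + 1 + 1)
        = 2 * AvCard (k + 1) + (Finset.range k).sum (fun u => u + 1) := avcard_rec k
    have hS : ∀ m : ℕ, 2 * (Finset.range m).sum (fun u => u + 1) = m * (m + 1) := by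
      intro m
      induction m with
      | zero => simp
      | succ p ihp =>
        rw [Finset.sum_range_succ]
        have : (p + 1) * (p + 1 + 1) = p * (p + 1) + 2 * (p + 1) := by ring
        omega
    have hS' := hS k
    have hpow : (2 : ℕ) ^ (k + 1 + 1) = 2 * 2 ^ (k + 1) := by
      rw [pow_succ]; ring
    have e1 : (k + 1 + 1) * (k + 1 + 1) = (k + 1) * (k + 1) + 2 * k + 3 := by ring
    have e2 : k * (k + 1) + (k + 1) = (k + 1) * (k + 1) := by ring
    omega

theorem natcard_eq (n : ℕ) :
    Nat.card {π : Equiv.Perm (Fin n) //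
      PermAvoids π ![3, 2, 1] ∧ PermAvoids π ![1, 3, 4, 2]} = AvCard n := by
  rw [Nat.card_eq_fintype_card, Fintype.card_subtype, AvCard]
  congr 1

end AvWork

open PowerSeries in
theorem av321_1342_gf :
    ((1 : PowerSeries ℚ) - 5 * X + 9 * X ^ 2 - 7 * X ^ 3 + 2 * X ^ 4) *
      PowerSeries.mk (fun n =>
        (Nat.card {π : Equiv.Perm (Fin n) //
            PermAvoids π ![3, 2, 1] ∧ PermAvoids π ![1, 3, 4, 2]} : ℚ)) =
      1 - 4 * X + 6 * X ^ 2 - 3 * X ^ 3 + X ^ 4 := by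
  classical
  set a : ℕ → ℚ := fun n =>
    (Nat.card {π : Equiv.Perm (Fin n) //
        PermAvoids π ![3, 2, 1] ∧ PermAvoids π ![1, 3, 4, 2]} : ℚ) with ha
  have haN : ∀ k, a k = (AvWork.AvCard k : ℚ) := by
    intro k
    simp only [ha]
    exact_mod_cast AvWork.natcard_eq k
  have ha0 : a 0 = 1 := by rw [haN 0, AvWork.avcard_zero]; norm_num
  have hclosed : ∀ k : ℕ, 2 * a (k + 1)
      = 3 * 2 ^ (k + 1) - (((k : ℚ) + 1) ^ 2 + ((k : ℚ) + 1) + 2) := by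
    intro k
    have h := AvWork.avcard_closed k
    have h2 := congrArg (fun m : ℕ => (m : ℚ)) h
    push_cast at h2
    rw [haN (k + 1)]
    push_cast
    linear_combination h2
  have ha1 : a 1 = 1 := by have := hclosed 0; norm_num at this; linarith
  have ha2 : a 2 = 2 := by have := hclosed 1; norm_num at this; linarith
  have ha3 : a 3 = 5 := by have := hclosed 2; norm_num at this; linarith
  have ha4 : a 4 = 13 := by have := hclosed 3; norm_num at this; linarith
  have hL : ((1 : PowerSeries ℚ) - 5 * X + 9 * X ^ 2 - 7 * X ^ 3 + 2 * X ^ 4) * PowerSeries.mk a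
      = PowerSeries.mk a - C (R := ℚ) 5 * (PowerSeries.mk a * X ^ 1)
        + C (R := ℚ) 9 * (PowerSeries.mk a * X ^ 2) - C (R := ℚ) 7 * (PowerSeries.mk a * X ^ 3)
        + C (R := ℚ) 2 * (PowerSeries.mk a * X ^ 4) := by
    have h2 : C (R := ℚ) 2 = (2 : PowerSeries ℚ) := map_ofNat (C (R := ℚ)) 2
    have h5 : C (R := ℚ) 5 = (5 : PowerSeries ℚ) := map_ofNat (C (R := ℚ)) 5
    have h7 : C (R := ℚ) 7 = (7 : PowerSeries ℚ) := map_ofNat (C (R := ℚ)) 7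
    have h9 : C (R := ℚ) 9 = (9 : PowerSeries ℚ) := map_ofNat (C (R := ℚ)) 9
    rw [h2, h5, h7, h9]
    ring
  have hR : ((1 : PowerSeries ℚ) - 4 * X + 6 * X ^ 2 - 3 * X ^ 3 + X ^ 4)
      = 1 - C (R := ℚ) 4 * X ^ 1 + C (R := ℚ) 6 * X ^ 2 - C (R := ℚ) 3 * X ^ 3 + 1 * X ^ 4 := by
    have h3 : C (R := ℚ) 3 = (3 : PowerSeries ℚ) := map_ofNat (C (R := ℚ)) 3
    have h4 : C (R := ℚ) 4 = (4 : PowerSeries ℚ) := map_ofNat (C (R := ℚ)) 4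
    have h6 : C (R := ℚ) 6 = (6 : PowerSeries ℚ) := map_ofNat (C (R := ℚ)) 6
    rw [h3, h4, h6]
    ring
  rw [hL, hR]
  apply PowerSeries.ext
  intro n
  simp only [map_sub, map_add, coeff_C_mul, one_mul, PowerSeries.coeff_mul_X_pow',
    PowerSeries.coeff_mk, PowerSeries.coeff_one, PowerSeries.coeff_X_pow,
    PowerSeries.coeff_C]
  match n with
  | 0 => norm_num [ha0]
  | 1 => norm_num [ha0, ha1]
  | 2 => norm_num [ha0, ha1, ha2]
  | 3 => norm_num [ha0, ha1, ha2, ha3]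
  | 4 => norm_num [ha0, ha1, ha2, ha3, ha4]
  | (m + 5) =>
    simp only [if_pos (show (1:ℕ) ≤ m + 5 by omega), if_pos (show (2:ℕ) ≤ m + 5 by omega),
      if_pos (show (3:ℕ) ≤ m + 5 by omega), if_pos (show (4:ℕ) ≤ m + 5 by omega),
      if_neg (show ¬(m + 5 = 0) by omega), if_neg (show ¬(m + 5 - 1 = 0) by omega),
      if_neg (show ¬(m + 5 - 2 = 0) by omega), if_neg (show ¬(m + 5 - 3 = 0) by omega),
      if_neg (show ¬(m + 5 - 4 = 0) by omega), if_neg (show ¬(m + 5 = 4) by omega)]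
    have e1 : m + 5 - 1 = m + 4 := by omega
    have e2 : m + 5 - 2 = m + 3 := by omega
    have e3 : m + 5 - 3 = m + 2 := by omega
    have e4 : m + 5 - 4 = m + 1 := by omega
    rw [e1, e2, e3, e4]
    have c5 := hclosed (m + 4)
    have c4 := hclosed (m + 3)
    have c3 := hclosed (m + 2)
    have c2 := hclosed (m + 1)
    have c1 := hclosed m
    push_cast at c5 c4 c3 c2 c1
    have i5 : m + 4 + 1 = m + 5 := by omega
    have i4 : m + 3 + 1 = m + 4 := by omega
    have i3 : m + 2 + 1 = m + 3 := by omega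
    have i2 : m + 1 + 1 = m + 2 := by omega
    rw [i5] at c5; rw [i4] at c4; rw [i3] at c3; rw [i2] at c2
    have p5 : (2 : ℚ) ^ (m + 5) = 32 * 2 ^ m := by rw [pow_add]; norm_num [mul_comm]
    have p4 : (2 : ℚ) ^ (m + 4) = 16 * 2 ^ m := by rw [pow_add]; norm_num [mul_comm]
    have p3 : (2 : ℚ) ^ (m + 3) = 8 * 2 ^ m := by rw [pow_add]; norm_num [mul_comm]
    have p2 : (2 : ℚ) ^ (m + 2) = 4 * 2 ^ m := by rw [pow_add]; norm_num [mul_comm]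
    have p1 : (2 : ℚ) ^ (m + 1) = 2 * 2 ^ m := by rw [pow_add]; norm_num [mul_comm]
    rw [p5] at c5; rw [p4] at c4; rw [p3] at c3; rw [p2] at c2; rw [p1] at c1
    linear_combination c5 / 2 - 5 / 2 * c4 + 9 / 2 * c3 - 7 / 2 * c2 + c1
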